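/- If φ^tot(θ) = 1 and θ is per-layer simplex-normalized, then for every intermediate layer l (1 < l < K), Σ_{r∈V_l} a_{·r} = 1 and for every node r ∈ V_l with a_{·r} > 0 one has a_{r·} = 1 (the forward mass arriving at used nodes is fully propagated to the output). -/
import Mathlib


open Finset

/-- Contiguity of an edge sequence: consecutive edges share endpoints. -/
def Contig (K : ℕ) (γ : Fin (K-1) → ℕ × ℕ) : Prop :=
  ∀ k : Fin (K-1), ∀ h : k.val + 1 < K - 1, (γ k).2 = (γ ⟨k.val + 1, h⟩).1

instance (K : ℕ) (γ : Fin (K-1) → ℕ × ℕ) : Decidable (Contig K γ) := by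
  unfold Contig; infer_instance

/-- Total connectivity: sum over all contiguous input-to-output edge sequences of
the product of edge weights. -/
noncomputable def phiTot (K : ℕ) (E : ℕ → Finset (ℕ × ℕ)) (θ : ℕ → ℕ → ℕ → ℝ) : ℝ :=
  ∑ γ ∈ (Fintype.piFinset (fun k : Fin (K-1) => E k.val)).filter (fun γ => Contig K γ),
    ∏ k : Fin (K-1), θ k.val (γ k).1 (γ k).2

/-- Total absolute weight of layer k. -/
noncomputable def Snorm (E : ℕ → Finset (ℕ × ℕ)) (W : ℕ → ℕ → ℕ → ℝ) (k : ℕ) : ℝ :=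
  ∑ e ∈ E k, |W k e.1 e.2|

/-- Per-layer normalized weights. -/
noncomputable def thetaNorm (E : ℕ → Finset (ℕ × ℕ)) (W : ℕ → ℕ → ℕ → ℝ)
    (k i j : ℕ) : ℝ :=
  |W k i j| / Snorm E W k

/-- Connectivity from the input layer to node `r` in layer `l`. -/
noncomputable def aIn (E : ℕ → Finset (ℕ × ℕ)) (θ : ℕ → ℕ → ℕ → ℝ) (l r : ℕ) : ℝ :=
  ∑ γ ∈ (Fintype.piFinset (fun k : Fin l => E k.val)).filter
      (fun γ => (∀ k : Fin l, ∀ h : k.val + 1 < l, (γ k).2 = (γ ⟨k.val + 1, h⟩).1)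
        ∧ ∀ h : 0 < l, (γ ⟨l - 1, by omega⟩).2 = r),
    ∏ k : Fin l, θ k.val (γ k).1 (γ k).2

/-- Connectivity from node `r` in layer `l` to the output layer (layer K-1). -/
noncomputable def aOut (K : ℕ) (E : ℕ → Finset (ℕ × ℕ)) (θ : ℕ → ℕ → ℕ → ℝ)
    (l r : ℕ) : ℝ :=
  ∑ γ ∈ (Fintype.piFinset (fun k : Fin (K - 1 - l) => E (l + k.val))).filter
      (fun γ => (∀ k : Fin (K - 1 - l), ∀ h : k.val + 1 < K - 1 - l,
          (γ k).2 = (γ ⟨k.val + 1, h⟩).1)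
        ∧ ∀ h : 0 < K - 1 - l, (γ ⟨0, h⟩).1 = r),
    ∏ k : Fin (K - 1 - l), θ (l + k.val) (γ k).1 (γ k).2

lemma prod_split {M : Type*} [CommMonoid M] {m l : ℕ} (hl : l ≤ m) (F : Fin m → M) :
    ∏ k : Fin m, F k
      = (∏ k : Fin l, F ⟨k.val, lt_of_lt_of_le k.isLt hl⟩)
        * ∏ k : Fin (m - l), F ⟨l + k.val, by have := k.isLt; omega⟩ := by
  have h : l + (m - l) = m := by omega
  have e1 : ∏ k : Fin m, F k = ∏ k : Fin (l + (m - l)), F (Fin.cast h k) :=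
    (Fintype.prod_equiv (finCongr h) _ _ (fun k => rfl)).symm
  rw [e1, Fin.prod_univ_add]
  congr 1

set_option maxHeartbeats 2000000 in
/-- if φ^tot(θ) = 1 (θ per-layer simplex-normalized) then at every
intermediate layer l, Σ_r a_{·r} = 1 and every used node fully propagates its
mass: a_{·r} > 0 → a_{r·} = 1. -/
theorem phiTot_one_forward_mass
    (K : ℕ) (n : ℕ → ℕ) (E : ℕ → Finset (ℕ × ℕ)) (θ : ℕ → ℕ → ℕ → ℝ)
    (hθ0 : ∀ k i j, 0 ≤ θ k i j)
    (hsum : ∀ k, k < K - 1 → ∑ e ∈ E k, θ k e.1 e.2 = 1)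
    (hE : ∀ k, ∀ e ∈ E k, e.1 < n k ∧ e.2 < n (k+1))
    (hφ : phiTot K E θ = 1)
    (l : ℕ) (hl0 : 0 < l) (hl : l < K - 1) :
    (∑ r ∈ Finset.range (n l), aIn E θ l r = 1) ∧
    ∀ r < n l, 0 < aIn E θ l r → aOut K E θ l r = 1 := by
  classical
  -- nonnegativity
  have hA0 : ∀ r, 0 ≤ aIn E θ l r := by
    intro r
    exact Finset.sum_nonneg fun γ _ => Finset.prod_nonneg fun k _ => hθ0 _ _ _
  have hB0 : ∀ r, 0 ≤ aOut K E θ l r := by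
    intro r
    exact Finset.sum_nonneg fun γ _ => Finset.prod_nonneg fun k _ => hθ0 _ _ _
  -- aOut ≤ 1
  have hB1 : ∀ r, aOut K E θ l r ≤ 1 := by
    intro r
    unfold aOut
    calc ∑ γ ∈ (Fintype.piFinset (fun k : Fin (K - 1 - l) => E (l + k.val))).filter
          (fun γ => (∀ k : Fin (K - 1 - l), ∀ h : k.val + 1 < K - 1 - l,
              (γ k).2 = (γ ⟨k.val + 1, h⟩).1)
            ∧ ∀ h : 0 < K - 1 - l, (γ ⟨0, h⟩).1 = r),
          ∏ k : Fin (K - 1 - l), θ (l + k.val) (γ k).1 (γ k).2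
        ≤ ∑ γ ∈ Fintype.piFinset (fun k : Fin (K - 1 - l) => E (l + k.val)),
            ∏ k : Fin (K - 1 - l), θ (l + k.val) (γ k).1 (γ k).2 :=
          Finset.sum_le_sum_of_subset_of_nonneg (Finset.filter_subset _ _)
            (fun γ _ _ => Finset.prod_nonneg fun k _ => hθ0 _ _ _)
      _ = ∏ k : Fin (K - 1 - l), ∑ e ∈ E (l + k.val), θ (l + k.val) e.1 e.2 :=
          (Finset.prod_univ_sum (fun k : Fin (K - 1 - l) => E (l + k.val))
            (fun k e => θ (l + k.val) e.1 e.2)).symm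
      _ = 1 := Finset.prod_eq_one fun k _ => hsum _ (by have := k.isLt; omega)
  -- the "head" set
  set Sl : Finset (Fin l → ℕ × ℕ) :=
    (Fintype.piFinset (fun k : Fin l => E k.val)).filter
      (fun γ => ∀ k : Fin l, ∀ h : k.val + 1 < l, (γ k).2 = (γ ⟨k.val + 1, h⟩).1) with hSl
  have hl1 : l - 1 < l := by omega
  -- sum of aIn over r equals sum over contiguous heads
  have h1 : ∑ r ∈ Finset.range (n l), aIn E θ l r
      = ∑ γ ∈ Sl, ∏ k : Fin l, θ k.val (γ k).1 (γ k).2 := by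
    rw [← Finset.sum_fiberwise_of_maps_to
      (g := fun γ : Fin l → ℕ × ℕ => (γ ⟨l - 1, hl1⟩).2) (t := Finset.range (n l))
      (fun γ hγ => by
        have hpi := (Finset.mem_filter.mp hγ).1
        have hmem := Fintype.mem_piFinset.mp hpi ⟨l - 1, hl1⟩
        have h2 := (hE _ _ hmem).2
        have h3 : l - 1 + 1 = l := by omega
        rw [h3] at h2
        exact Finset.mem_range.mpr h2)
      (fun γ => ∏ k : Fin l, θ k.val (γ k).1 (γ k).2)]
    refine Finset.sum_congr rfl fun r hr => ?_
    unfold aIn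
    rw [hSl, Finset.filter_filter]
    refine Finset.sum_congr (Finset.filter_congr fun γ _ => ?_) fun _ _ => rfl
    constructor
    · rintro ⟨hc, he⟩
      exact ⟨hc, he hl0⟩
    · rintro ⟨hc, he⟩
      exact ⟨hc, fun _ => he⟩
  -- sum over heads ≤ 1
  have h2 : ∑ γ ∈ Sl, ∏ k : Fin l, θ k.val (γ k).1 (γ k).2 ≤ 1 := by
    calc ∑ γ ∈ Sl, ∏ k : Fin l, θ k.val (γ k).1 (γ k).2
        ≤ ∑ γ ∈ Fintype.piFinset (fun k : Fin l => E k.val),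
            ∏ k : Fin l, θ k.val (γ k).1 (γ k).2 :=
          Finset.sum_le_sum_of_subset_of_nonneg (Finset.filter_subset _ _)
            (fun γ _ _ => Finset.prod_nonneg fun k _ => hθ0 _ _ _)
      _ = ∏ k : Fin l, ∑ e ∈ E k.val, θ k.val e.1 e.2 :=
          (Finset.prod_univ_sum (fun k : Fin l => E k.val)
            (fun k e => θ k.val e.1 e.2)).symm
      _ = 1 := Finset.prod_eq_one fun k _ => hsum _ (by have := k.isLt; omega)
  -- splitting: phiTot ≤ ∑ aIn * aOut
  have h4 : phiTot K E θ ≤ ∑ r ∈ Finset.range (n l), aIn E θ l r * aOut K E θ l r := by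
    set A : ℕ → Finset (Fin l → ℕ × ℕ) := fun r =>
      (Fintype.piFinset (fun k : Fin l => E k.val)).filter
        (fun γ => (∀ k : Fin l, ∀ h : k.val + 1 < l, (γ k).2 = (γ ⟨k.val + 1, h⟩).1)
          ∧ ∀ h : 0 < l, (γ ⟨l - 1, by omega⟩).2 = r) with hA
    set B : ℕ → Finset (Fin (K - 1 - l) → ℕ × ℕ) := fun r =>
      (Fintype.piFinset (fun k : Fin (K - 1 - l) => E (l + k.val))).filter
        (fun γ => (∀ k : Fin (K - 1 - l), ∀ h : k.val + 1 < K - 1 - l,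
            (γ k).2 = (γ ⟨k.val + 1, h⟩).1)
          ∧ ∀ h : 0 < K - 1 - l, (γ ⟨0, h⟩).1 = r) with hB
    set i : (Fin (K - 1) → ℕ × ℕ) → (Σ _ : ℕ, (Fin l → ℕ × ℕ) × (Fin (K - 1 - l) → ℕ × ℕ)) :=
      fun γ => ⟨(γ ⟨l - 1, by omega⟩).2,
        (fun k => γ ⟨k.val, lt_of_lt_of_le k.isLt (le_of_lt hl)⟩,
         fun k => γ ⟨l + k.val, by have := k.isLt; omega⟩)⟩ with hi
    set G : (Σ _ : ℕ, (Fin l → ℕ × ℕ) × (Fin (K - 1 - l) → ℕ × ℕ)) → ℝ :=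
      fun p => (∏ k : Fin l, θ k.val (p.2.1 k).1 (p.2.1 k).2)
        * ∏ k : Fin (K - 1 - l), θ (l + k.val) (p.2.2 k).1 (p.2.2 k).2 with hG
    set S : Finset (Fin (K - 1) → ℕ × ℕ) :=
      (Fintype.piFinset (fun k : Fin (K - 1) => E k.val)).filter (fun γ => Contig K γ) with hS
    have hinj : ∀ γ ∈ S, ∀ γ' ∈ S, i γ = i γ' → γ = γ' := by
      intro γ _ γ' _ he
      have hpair : ((fun k : Fin l => γ ⟨k.val, lt_of_lt_of_le k.isLt (le_of_lt hl)⟩,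
          fun k : Fin (K - 1 - l) => γ ⟨l + k.val, by have := k.isLt; omega⟩)
            : (Fin l → ℕ × ℕ) × (Fin (K - 1 - l) → ℕ × ℕ))
          = (fun k : Fin l => γ' ⟨k.val, lt_of_lt_of_le k.isLt (le_of_lt hl)⟩,
          fun k : Fin (K - 1 - l) => γ' ⟨l + k.val, by have := k.isLt; omega⟩) :=
        eq_of_heq (Sigma.mk.inj_iff.mp he).2
      have hhead := congrArg Prod.fst hpair
      have htail := congrArg Prod.snd hpair
      funext j
      rcases lt_or_ge j.val l with hj | hj
      · exact congrFun hhead ⟨j.val, hj⟩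
      · have hj2 : j.val - l < K - 1 - l := by have := j.isLt; omega
        have hjv : l + (j.val - l) < K - 1 := by have := j.isLt; omega
        have h5 : γ ⟨l + (j.val - l), hjv⟩ = γ' ⟨l + (j.val - l), hjv⟩ :=
          congrFun htail ⟨j.val - l, hj2⟩
        have hjj : (⟨l + (j.val - l), hjv⟩ : Fin (K - 1)) = j :=
          Fin.ext (by simp; omega)
        rwa [hjj] at h5
    have hsub : S.image i ⊆ (Finset.range (n l)).sigma fun r => (A r) ×ˢ (B r) := by
      intro p hp
      obtain ⟨γ, hγ, rfl⟩ := Finset.mem_image.mp hp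
      obtain ⟨hpi, hc⟩ := Finset.mem_filter.mp hγ
      have hpi' := Fintype.mem_piFinset.mp hpi
      rw [Finset.mem_sigma]
      refine ⟨?_, Finset.mem_product.mpr ⟨?_, ?_⟩⟩
      · have h2 := (hE _ _ (hpi' ⟨l - 1, by omega⟩)).2
        have h3 : l - 1 + 1 = l := by omega
        rw [h3] at h2
        exact Finset.mem_range.mpr h2
      · rw [hA]
        refine Finset.mem_filter.mpr ⟨Fintype.mem_piFinset.mpr fun k => hpi' _, ?_, ?_⟩
        · intro k h
          have hk1 : k.val < K - 1 := by omega
          have hk2 : k.val + 1 < K - 1 := by omega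
          exact hc ⟨k.val, hk1⟩ hk2
        · intro _
          rfl
      · rw [hB]
        refine Finset.mem_filter.mpr ⟨Fintype.mem_piFinset.mpr fun k => hpi' _, ?_, ?_⟩
        · intro k h
          have hk1 : l + k.val < K - 1 := by omega
          have hk2 : l + k.val + 1 < K - 1 := by omega
          exact hc ⟨l + k.val, hk1⟩ hk2
        · intro h
          have hk1 : l - 1 < K - 1 := by omega
          have hk2 : l - 1 + 1 < K - 1 := by omega
          have h6 := hc ⟨l - 1, hk1⟩ hk2
          have h3 : l - 1 + 1 = l := by omega
          simp only [h3] at h6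
          exact h6.symm
    have hval : ∀ γ ∈ S, (∏ k : Fin (K - 1), θ k.val (γ k).1 (γ k).2) = G (i γ) := by
      intro γ _
      exact prod_split (le_of_lt hl) (fun k : Fin (K - 1) => θ k.val (γ k).1 (γ k).2)
    calc phiTot K E θ = ∑ γ ∈ S, ∏ k : Fin (K - 1), θ k.val (γ k).1 (γ k).2 := rfl
      _ = ∑ γ ∈ S, G (i γ) := Finset.sum_congr rfl hval
      _ = ∑ p ∈ S.image i, G p := (Finset.sum_image hinj).symm
      _ ≤ ∑ p ∈ (Finset.range (n l)).sigma fun r => (A r) ×ˢ (B r), G p :=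
          Finset.sum_le_sum_of_subset_of_nonneg hsub
            (fun p _ _ => mul_nonneg (Finset.prod_nonneg fun k _ => hθ0 _ _ _)
              (Finset.prod_nonneg fun k _ => hθ0 _ _ _))
      _ = ∑ r ∈ Finset.range (n l), aIn E θ l r * aOut K E θ l r := by
          rw [Finset.sum_sigma]
          refine Finset.sum_congr rfl fun r _ => ?_
          rw [Finset.sum_product]
          unfold aIn aOut
          rw [Finset.sum_mul_sum]
  -- assembly
  have h5 : ∑ r ∈ Finset.range (n l), aIn E θ l r * aOut K E θ l r
      ≤ ∑ r ∈ Finset.range (n l), aIn E θ l r :=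
    Finset.sum_le_sum fun r _ => mul_le_of_le_one_right (hA0 r) (hB1 r)
  rw [hφ] at h4
  have hsum1 : ∑ r ∈ Finset.range (n l), aIn E θ l r = 1 := by
    rw [h1]; rw [h1] at h5; linarith
  have hprod1 : ∑ r ∈ Finset.range (n l), aIn E θ l r * aOut K E θ l r = 1 := by
    linarith [hsum1 ▸ h5]
  refine ⟨hsum1, fun r hr hpos => ?_⟩
  have hz : ∑ r ∈ Finset.range (n l), aIn E θ l r * (1 - aOut K E θ l r) = 0 := by
    simp only [mul_sub, mul_one, Finset.sum_sub_distrib]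
    rw [hsum1, hprod1]; ring
  have hz' := (Finset.sum_eq_zero_iff_of_nonneg
    (fun r _ => mul_nonneg (hA0 r) (by linarith [hB1 r]))).mp hz r (Finset.mem_range.mpr hr)
  rcases mul_eq_zero.mp hz' with h | h
  · linarith
  · linarith
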